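/- Let L ≥ 1, let α be an L×L complex matrix with ‖α‖ < 1, and let U₁, V₁, U₂, V₂ ∈ U(L). Then for every z ∈ ℂ \ {0} the transfer matrix T(z) is invertible and T(z)⁻¹ = 𝓛 · T(1/z̄)* · 𝓛, where z̄ denotes complex conjugation. -/

import Mathlib

open Matrix
open scoped Matrix.Norms.L2Operator ComplexOrder

/-- The block matrix `T₀(z) = [[z⁻¹ ρ̃⁻¹, ρ̃⁻¹ α*], [α ρ̃⁻¹, z ρ⁻¹]]`, where `ρ` (resp. `ρt`)
stands for the positive semidefinite square root of `1 - α αᴴ` (resp. `1 - αᴴ α`), passed as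
arguments. -/
noncomputable def T0mat (L : ℕ) (α ρ ρt : Matrix (Fin L) (Fin L) ℂ) (z : ℂ) :
    Matrix (Fin L ⊕ Fin L) (Fin L ⊕ Fin L) ℂ :=
  fromBlocks (z⁻¹ • ρt⁻¹) (ρt⁻¹ * αᴴ) (α * ρt⁻¹) (z • ρ⁻¹)

/-- The transfer matrix `T(z) = diag(V₂, U₂ᴴ) · T₀(z) · diag(V₁, U₁ᴴ) · T₀(1)`. -/
noncomputable def transferMat (L : ℕ) (α ρ ρt U₁ V₁ U₂ V₂ : Matrix (Fin L) (Fin L) ℂ) (z : ℂ) :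
    Matrix (Fin L ⊕ Fin L) (Fin L ⊕ Fin L) ℂ :=
  fromBlocks V₂ 0 0 U₂ᴴ * T0mat L α ρ ρt z * fromBlocks V₁ 0 0 U₁ᴴ * T0mat L α ρ ρt 1

namespace Stmt7Aux

/-- The trace of `Aᴴ * A` is a nonnegative real, vanishing only when `A = 0`. -/
lemma trace_aux {m n : Type*} [Fintype m] [Fintype n] (A : Matrix m n ℂ) :
    ∃ r : ℝ, 0 ≤ r ∧ (Aᴴ * A).trace = (r : ℂ) ∧ (r = 0 → A = 0) := by
  refine ⟨∑ j, ∑ i, Complex.normSq (A i j),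
    Finset.sum_nonneg fun j _ => Finset.sum_nonneg fun i _ => Complex.normSq_nonneg _, ?_, ?_⟩
  · simp only [Matrix.trace, Matrix.diag, Matrix.mul_apply, Matrix.conjTranspose_apply]
    push_cast
    refine Finset.sum_congr rfl fun j _ => Finset.sum_congr rfl fun i _ => ?_
    rw [Complex.star_def]
    exact Complex.normSq_eq_conj_mul_self.symm
  · intro h
    have h1 := (Finset.sum_eq_zero_iff_of_nonneg (fun j _ => Finset.sum_nonneg
      (fun i _ => Complex.normSq_nonneg (A i j)))).mp h
    ext i j
    have h2 := (Finset.sum_eq_zero_iff_of_nonneg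
      (fun i _ => Complex.normSq_nonneg (A i j))).mp (h1 j (Finset.mem_univ j)) i
      (Finset.mem_univ i)
    simpa using Complex.normSq_eq_zero.mp h2

lemma sqrt_aux {n : Type*} [Fintype n] [DecidableEq n] {A : Matrix n n ℂ} (hA : A.PosSemidef) :
    ∃ S : Matrix n n ℂ, Sᴴ = S ∧ S * S = A := by
  open MatrixOrder in
  exact ⟨CFC.sqrt A, (CFC.sqrt_nonneg A).posSemidef.1, CFC.sqrt_mul_sqrt_self A hA.nonneg⟩

/-- A product step lemma. -/
lemma step {n : Type*} [Fintype n] {M Lm N : Matrix n n ℂ} (h : M * Lm * N = Lm)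
    (X : Matrix n n ℂ) : M * (Lm * (N * X)) = Lm * X := by
  rw [← Matrix.mul_assoc, ← Matrix.mul_assoc, h]

/-- Key identity: `T₀(z) · 𝓛 · T₀(1/z̄)ᴴ = 𝓛`. -/
lemma T0_key (L : ℕ) (α ρ ρt : Matrix (Fin L) (Fin L) ℂ)
    (hρH : ρᴴ = ρ) (hρtH : ρtᴴ = ρt)
    (hρd : IsUnit ρ.det) (hρtd : IsUnit ρt.det)
    (hρ2 : ρ * ρ = 1 - α * αᴴ) (hρt2 : ρt * ρt = 1 - αᴴ * α)
    (hcomm : ρ * α = α * ρt) {z : ℂ} (hz : z ≠ 0) :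
    T0mat L α ρ ρt z * fromBlocks (1 : Matrix (Fin L) (Fin L) ℂ) 0 0 (-1) *
      (T0mat L α ρ ρt (1 / (starRingEnd ℂ z)))ᴴ =
    fromBlocks (1 : Matrix (Fin L) (Fin L) ℂ) 0 0 (-1) := by
  have hA1 : ρt⁻¹ * ρt = 1 := nonsing_inv_mul _ hρtd
  have hA2 : ρt * ρt⁻¹ = 1 := mul_nonsing_inv _ hρtd
  have hB1 : ρ⁻¹ * ρ = 1 := nonsing_inv_mul _ hρd
  have hB2 : ρ * ρ⁻¹ = 1 := mul_nonsing_inv _ hρd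
  have hAH : ρt⁻¹ᴴ = ρt⁻¹ := by rw [conjTranspose_nonsing_inv, hρtH]
  have hBH : ρ⁻¹ᴴ = ρ⁻¹ := by rw [conjTranspose_nonsing_inv, hρH]
  have hc : α * ρt⁻¹ = ρ⁻¹ * α := by
    have h1 : ρ⁻¹ * (ρ * α * ρt⁻¹) = ρ⁻¹ * (α * ρt * ρt⁻¹) := by rw [hcomm]
    rw [← Matrix.mul_assoc, ← Matrix.mul_assoc, hB1, one_mul] at h1
    rw [Matrix.mul_assoc α ρt ρt⁻¹, hA2, mul_one] at h1
    exact h1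
  have hc' : ρt⁻¹ * αᴴ = αᴴ * ρ⁻¹ := by
    have := congrArg conjTranspose hc
    rw [conjTranspose_mul, conjTranspose_mul, hAH, hBH] at this
    exact this
  have hαα : αᴴ * α = 1 - ρt * ρt := by rw [hρt2]; abel
  have haaH : α * αᴴ = 1 - ρ * ρ := by rw [hρ2]; abel
  have hw1 : star (1 / (starRingEnd ℂ z))⁻¹ = z := by
    simp [Complex.star_def]
  have hw2 : star (1 / (starRingEnd ℂ z)) = z⁻¹ := by
    simp [Complex.star_def]
  have hT : (T0mat L α ρ ρt (1 / (starRingEnd ℂ z)))ᴴ =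
      fromBlocks (z • ρt⁻¹) (ρt⁻¹ * αᴴ) (α * ρt⁻¹) (z⁻¹ • ρ⁻¹) := by
    rw [T0mat, fromBlocks_conjTranspose, conjTranspose_smul, conjTranspose_smul,
      conjTranspose_mul, conjTranspose_mul, hAH, hBH, conjTranspose_conjTranspose, hw1, hw2]
  have hTL : T0mat L α ρ ρt z * fromBlocks (1 : Matrix (Fin L) (Fin L) ℂ) 0 0 (-1) =
      fromBlocks (z⁻¹ • ρt⁻¹) (-(ρt⁻¹ * αᴴ)) (α * ρt⁻¹) (-(z • ρ⁻¹)) := by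
    rw [T0mat, fromBlocks_multiply]
    simp
  rw [hTL, hT, fromBlocks_multiply]
  have e11 : z⁻¹ • ρt⁻¹ * (z • ρt⁻¹) + -(ρt⁻¹ * αᴴ) * (α * ρt⁻¹) = 1 := by
    have h1 : ρt⁻¹ * αᴴ * (α * ρt⁻¹) = ρt⁻¹ * ρt⁻¹ - 1 := by
      calc ρt⁻¹ * αᴴ * (α * ρt⁻¹) = ρt⁻¹ * (αᴴ * α) * ρt⁻¹ := by noncomm_ring
        _ = ρt⁻¹ * (1 - ρt * ρt) * ρt⁻¹ := by rw [hαα]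
        _ = ρt⁻¹ * ρt⁻¹ - (ρt⁻¹ * ρt) * (ρt * ρt⁻¹) := by noncomm_ring
        _ = ρt⁻¹ * ρt⁻¹ - 1 := by rw [hA1, hA2, one_mul]
    rw [smul_mul_assoc, mul_smul_comm, smul_smul, inv_mul_cancel₀ hz, one_smul, neg_mul, h1]
    abel
  have e12 : z⁻¹ • ρt⁻¹ * (ρt⁻¹ * αᴴ) + -(ρt⁻¹ * αᴴ) * (z⁻¹ • ρ⁻¹) = 0 := by
    have h1 : ρt⁻¹ * (ρt⁻¹ * αᴴ) = ρt⁻¹ * αᴴ * ρ⁻¹ := by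
      rw [hc', ← Matrix.mul_assoc, hc']
    rw [smul_mul_assoc, neg_mul, mul_smul_comm, h1]
    abel
  have e21 : α * ρt⁻¹ * (z • ρt⁻¹) + -(z • ρ⁻¹) * (α * ρt⁻¹) = 0 := by
    have h1 : α * ρt⁻¹ * ρt⁻¹ = ρ⁻¹ * (α * ρt⁻¹) := by
      conv_lhs => rw [hc]
      noncomm_ring
    rw [mul_smul_comm, neg_mul, smul_mul_assoc, h1]
    abel
  have e22 : α * ρt⁻¹ * (ρt⁻¹ * αᴴ) + -(z • ρ⁻¹) * (z⁻¹ • ρ⁻¹) = -1 := by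
    have h1 : α * ρt⁻¹ * (ρt⁻¹ * αᴴ) = ρ⁻¹ * ρ⁻¹ - 1 := by
      calc α * ρt⁻¹ * (ρt⁻¹ * αᴴ) = ρ⁻¹ * α * (αᴴ * ρ⁻¹) := by rw [hc, hc']
        _ = ρ⁻¹ * (α * αᴴ) * ρ⁻¹ := by noncomm_ring
        _ = ρ⁻¹ * (1 - ρ * ρ) * ρ⁻¹ := by rw [haaH]
        _ = ρ⁻¹ * ρ⁻¹ - (ρ⁻¹ * ρ) * (ρ * ρ⁻¹) := by noncomm_ring
        _ = ρ⁻¹ * ρ⁻¹ - 1 := by rw [hB1, hB2, one_mul]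
    rw [neg_mul, smul_mul_assoc, mul_smul_comm, smul_smul, mul_inv_cancel₀ hz, one_smul, h1]
    abel
  rw [e11, e12, e21, e22]

end Stmt7Aux

open Stmt7Aux in
/-- Let `L ≥ 1`, `α` an `L×L` complex matrix with `‖α‖ < 1` (operator norm
induced by the Euclidean norm), and `U₁, V₁, U₂, V₂ ∈ U(L)`. Then for every `z ∈ ℂ \ {0}` the
transfer matrix `T(z)` is invertible and `T(z)⁻¹ = 𝓛 · T(1/z̄)ᴴ · 𝓛` with `𝓛 = diag(I, -I)`. -/
theorem stmt_7 (L : ℕ) (hL : 1 ≤ L) (α ρ ρt U₁ V₁ U₂ V₂ : Matrix (Fin L) (Fin L) ℂ)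
    (hα : ‖α‖ < 1)
    (hρ : ρ.PosSemidef) (hρ2 : ρ * ρ = 1 - α * αᴴ)
    (hρt : ρt.PosSemidef) (hρt2 : ρt * ρt = 1 - αᴴ * α)
    (hU₁ : U₁ ∈ Matrix.unitaryGroup (Fin L) ℂ) (hV₁ : V₁ ∈ Matrix.unitaryGroup (Fin L) ℂ)
    (hU₂ : U₂ ∈ Matrix.unitaryGroup (Fin L) ℂ) (hV₂ : V₂ ∈ Matrix.unitaryGroup (Fin L) ℂ) :
    ∀ z : ℂ, z ≠ 0 →
      IsUnit (transferMat L α ρ ρt U₁ V₁ U₂ V₂ z) ∧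
      (transferMat L α ρ ρt U₁ V₁ U₂ V₂ z)⁻¹ =
        fromBlocks (1 : Matrix (Fin L) (Fin L) ℂ) 0 0 (-1) *
          (transferMat L α ρ ρt U₁ V₁ U₂ V₂ (1 / (starRingEnd ℂ z)))ᴴ *
          fromBlocks (1 : Matrix (Fin L) (Fin L) ℂ) 0 0 (-1) := by
  -- invertibility of 1 - ααᴴ and 1 - αᴴα
  have hαn : (0:ℝ) ≤ ‖α‖ := norm_nonneg α
  have hsq : ‖α‖ * ‖α‖ < 1 := by nlinarith
  have hu1 : IsUnit (1 - α * αᴴ) := by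
    refine isUnit_one_sub_of_norm_lt_one (lt_of_le_of_lt (Matrix.l2_opNorm_mul α αᴴ) ?_)
    rw [Matrix.l2_opNorm_conjTranspose]; exact hsq
  have hu2 : IsUnit (1 - αᴴ * α) := by
    refine isUnit_one_sub_of_norm_lt_one (lt_of_le_of_lt (Matrix.l2_opNorm_mul αᴴ α) ?_)
    rw [Matrix.l2_opNorm_conjTranspose]; exact hsq
  have hρd : IsUnit ρ.det := by
    have h1 : ρ.det * ρ.det = (1 - α * αᴴ).det := by rw [← det_mul, hρ2]
    have h2 := (Matrix.isUnit_iff_isUnit_det _).1 hu1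
    rw [← h1] at h2
    exact isUnit_of_mul_isUnit_left h2
  have hρtd : IsUnit ρt.det := by
    have h1 : ρt.det * ρt.det = (1 - αᴴ * α).det := by rw [← det_mul, hρt2]
    have h2 := (Matrix.isUnit_iff_isUnit_det _).1 hu2
    rw [← h1] at h2
    exact isUnit_of_mul_isUnit_left h2
  -- the intertwining relation ρ α = α ρt
  have hcomm : ρ * α = α * ρt := by
    set Y := ρ * α - α * ρt with hYdef
    have hS : ρ * Y + Y * ρt = 0 := by
      have h1 : ρ * (ρ * α - α * ρt) + (ρ * α - α * ρt) * ρt = ρ * ρ * α - α * (ρt * ρt) := by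
        noncomm_ring
      rw [hYdef, h1, hρ2, hρt2]
      noncomm_ring
    obtain ⟨rS, hrH, hr2⟩ := sqrt_aux hρ
    obtain ⟨sS, hsH, hs2⟩ := sqrt_aux hρt
    have e1 : (rS * Y)ᴴ * (rS * Y) = Yᴴ * (ρ * Y) := by
      rw [conjTranspose_mul, hrH, Matrix.mul_assoc, ← Matrix.mul_assoc rS, hr2]
    have e2 : ((Y * sS)ᴴ * (Y * sS)).trace = (Yᴴ * (Y * ρt)).trace := by
      rw [conjTranspose_mul, hsH, Matrix.mul_assoc, Matrix.trace_mul_comm sS,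
        Matrix.mul_assoc, Matrix.mul_assoc, hs2]
    obtain ⟨r1, hr1n, htr1, hz1⟩ := trace_aux (rS * Y)
    obtain ⟨r2, hr2n, htr2, hz2⟩ := trace_aux (Y * sS)
    have hsum : (r1 : ℂ) + (r2 : ℂ) = 0 := by
      rw [← htr1, ← htr2, e1, e2, ← Matrix.trace_add, ← Matrix.mul_add, hS, Matrix.mul_zero,
        Matrix.trace_zero]
    have hsum' : r1 + r2 = 0 := by exact_mod_cast hsum
    have hr10 : r1 = 0 := by linarith
    have hY0 : rS * Y = 0 := hz1 hr10
    have hrd : IsUnit rS.det := by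
      have h1 : rS.det * rS.det = ρ.det := by rw [← det_mul, hr2]
      have h2 := hρd
      rw [← h1] at h2
      exact isUnit_of_mul_isUnit_left h2
    have : Y = 0 := by
      have h3 : rS⁻¹ * (rS * Y) = Y := by
        rw [← Matrix.mul_assoc, nonsing_inv_mul _ hrd, one_mul]
      rw [hY0, Matrix.mul_zero] at h3
      exact h3.symm
    have := sub_eq_zero.mp this
    exact this
  intro z hz
  -- key identities for the factors
  have hT0z := T0_key L α ρ ρt hρ.1 hρt.1 hρd hρtd hρ2 hρt2 hcomm hz
  have hT01 := T0_key L α ρ ρt hρ.1 hρt.1 hρd hρtd hρ2 hρt2 hcomm (one_ne_zero (α := ℂ))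
  rw [show (1 : ℂ) / (starRingEnd ℂ 1) = 1 by simp] at hT01
  have hD : ∀ U V : Matrix (Fin L) (Fin L) ℂ, U ∈ Matrix.unitaryGroup (Fin L) ℂ →
      V ∈ Matrix.unitaryGroup (Fin L) ℂ →
      fromBlocks V 0 0 Uᴴ * fromBlocks (1 : Matrix (Fin L) (Fin L) ℂ) 0 0 (-1) *
        (fromBlocks V 0 0 Uᴴ)ᴴ = fromBlocks (1 : Matrix (Fin L) (Fin L) ℂ) 0 0 (-1) := by
    intro U V hU hV
    have hV1 : V * Vᴴ = 1 := by
      rw [← Matrix.star_eq_conjTranspose]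
      exact (Matrix.mem_unitaryGroup_iff).mp hV
    have hU1 : Uᴴ * U = 1 := by
      rw [← Matrix.star_eq_conjTranspose]
      exact (Matrix.mem_unitaryGroup_iff').mp hU
    rw [fromBlocks_conjTranspose, fromBlocks_multiply, fromBlocks_multiply]
    simp [hV1, hU1, fromBlocks_one]
  have hD1 := hD U₁ V₁ hU₁ hV₁
  have hD2 := hD U₂ V₂ hU₂ hV₂
  have hLL : fromBlocks (1 : Matrix (Fin L) (Fin L) ℂ) 0 0 (-1) *
      fromBlocks (1 : Matrix (Fin L) (Fin L) ℂ) (0 : Matrix (Fin L) (Fin L) ℂ)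
      (0 : Matrix (Fin L) (Fin L) ℂ) (-1 : Matrix (Fin L) (Fin L) ℂ) = 1 := by
    rw [fromBlocks_multiply]
    simp [fromBlocks_one]
  have hmul : transferMat L α ρ ρt U₁ V₁ U₂ V₂ z *
      (fromBlocks (1 : Matrix (Fin L) (Fin L) ℂ) 0 0 (-1) *
        (transferMat L α ρ ρt U₁ V₁ U₂ V₂ (1 / (starRingEnd ℂ z)))ᴴ *
        fromBlocks (1 : Matrix (Fin L) (Fin L) ℂ) 0 0 (-1)) = 1 := by
    simp only [transferMat, conjTranspose_mul, Matrix.mul_assoc]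
    rw [step hT01, step hD1, step hT0z, ← Matrix.mul_assoc, ← Matrix.mul_assoc, hD2, hLL]
  refine ⟨?_, ?_⟩
  · rw [Matrix.isUnit_iff_isUnit_det]
    have := congrArg Matrix.det hmul
    rw [det_mul, det_one] at this
    exact IsUnit.of_mul_eq_one _ this
  · have := Matrix.inv_eq_right_inv hmul
    rw [this, Matrix.mul_assoc]
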